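/- arXiv:1012.1016 — 4 statements merged into one kernel-verified Lean document; each statement's English description precedes it below -/
import Mathlib

section
/- Let K be an algebraically closed field, n ≥ 2 and 1 ≤ d ≤ n−1, and let C be an (n−d)×n matrix over K of rank n−d. An n×n matrix A over K has a nonzero eigenvector (for some eigenvalue in K) lying in the d-dimensional subspace L = ker C of K^n if and only if the Kalman matrix of A has rank strictly less than n, i.e., if and only if all n×n minors of the Kalman matrix of A vanish. -/
open Matrix

/-- The Kalman matrix of `A` with respect to `C`: the `((d+1)(n-d)) × n` matrix obtained by
vertically stacking the blocks `C * A ^ i` for `i = 0, 1, …, d`; the row indexed by `(i, r)`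
is the `r`-th row of `C * A ^ i`. -/
noncomputable def kalmanMatrix {K : Type*} [CommRing K] {n d : ℕ}
    (C : Matrix (Fin (n - d)) (Fin n) K) (A : Matrix (Fin n) (Fin n) K) :
    Matrix (Fin (d + 1) × Fin (n - d)) (Fin n) K :=
  fun p j => (C * A ^ (p.1 : ℕ)) p.2 j

open Module

/-- Over a field, a matrix with `n` columns has rank `< n` iff it has nontrivial kernel. -/
lemma aux_rank_lt_iff_exists_mulVec_eq_zero {K : Type*} [Field K] {m : Type*} [Fintype m]
    {n : ℕ} (M : Matrix m (Fin n) K) :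
    M.rank < n ↔ ∃ v : Fin n → K, v ≠ 0 ∧ M.mulVec v = 0 := by
  have h := LinearMap.finrank_range_add_finrank_ker M.mulVecLin
  rw [Module.finrank_fin_fun] at h
  have hrank : M.rank = finrank K (LinearMap.range M.mulVecLin) := rfl
  constructor
  · intro hlt
    have hne : LinearMap.ker M.mulVecLin ≠ ⊥ := by
      intro hb
      rw [hb, finrank_bot] at h
      omega
    obtain ⟨v, hv, hv0⟩ := Submodule.ne_bot_iff _ |>.mp hne
    exact ⟨v, hv0, by simpa [Matrix.mulVecLin_apply] using hv⟩
  · rintro ⟨v, hv0, hv⟩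
    have hne : LinearMap.ker M.mulVecLin ≠ ⊥ := by
      rw [Submodule.ne_bot_iff]
      exact ⟨v, by simpa [Matrix.mulVecLin_apply] using hv, hv0⟩
    have : finrank K (LinearMap.ker M.mulVecLin) ≠ 0 := by
      intro h0
      exact hne (Submodule.finrank_eq_zero.mp h0)
    omega

/-- Over a field, a matrix with `n` columns has rank `< n` iff all its `n × n` minors vanish. -/
lemma aux_rank_lt_iff_forall_det {K : Type*} [Field K] {m : Type*} [Fintype m]
    {n : ℕ} (M : Matrix m (Fin n) K) :
    M.rank < n ↔ ∀ r : Fin n → m, (M.submatrix r id).det = 0 := by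
  classical
  constructor
  · intro hlt r
    by_contra hdet
    have hu : IsUnit (M.submatrix r id) :=
      (Matrix.isUnit_iff_isUnit_det _).2 (Ne.isUnit hdet)
    have h1 : (M.submatrix r id).rank = n := by
      rw [Matrix.rank_of_isUnit _ hu, Fintype.card_fin]
    have h2 : (M.submatrix r id).rank ≤ M.rank := by
      exact Matrix.rank_submatrix_le M r id
    omega
  · intro hall
    by_contra hge
    push_neg at hge
    have hrank : M.rank = n := le_antisymm (by simpa using M.rank_le_card_width) hge
    have hspan : Submodule.span K (Set.range M) = ⊤ := by
      apply Submodule.eq_top_of_finrank_eq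
      rw [show Set.range M = Set.range M.row from rfl, ← Matrix.rank_eq_finrank_span_row, hrank, Module.finrank_fin_fun]
    obtain ⟨s, hsub, hspan', hli⟩ := exists_linearIndependent K (Set.range M)
    rw [hspan] at hspan'
    have b : Basis s K (Fin n → K) := Module.Basis.mk hli (by rw [Subtype.range_val, hspan'])
    haveI : Fintype s := FiniteDimensional.fintypeBasisIndex b
    have hcard : Fintype.card s = n := by
      rw [← Module.finrank_eq_card_basis b, Module.finrank_fin_fun]
    let e : Fin n ≃ s := (Fintype.equivFinOfCardEq hcard).symm
    choose idx hidx using fun x : s => hsub x.2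
    set r : Fin n → m := fun i => idx (e i) with hr
    have hli2 : LinearIndependent K (fun i : Fin n => M (r i)) := by
      have hcomp := hli.comp (fun i : Fin n => e i) e.injective
      have heq : (fun i : Fin n => M (r i)) =
          (Subtype.val ∘ fun i : Fin n => e i) := by
        funext i
        simp only [hr, Function.comp_apply, hidx]
      rw [heq]
      exact hcomp
    have hli3 : LinearIndependent K (fun i : Fin n => (M.submatrix r id) i) := hli2
    have hu : IsUnit (M.submatrix r id) := Matrix.linearIndependent_rows_iff_isUnit.mp hli3
    have hu' : IsUnit (M.submatrix r id).det := (Matrix.isUnit_iff_isUnit_det _).mp hu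
    rw [hall r] at hu'
    exact hu'.ne_zero rfl

/-- An `n × n` matrix `A` over an algebraically closed field has a nonzero eigenvector in the
`d`-dimensional subspace `L = ker C` if and only if the Kalman matrix has rank `< n`, if and
only if all `n × n` minors of the Kalman matrix vanish. -/
theorem stmt0 {K : Type*} [Field K] [IsAlgClosed K] (n d : ℕ)
    (hn : 2 ≤ n) (hd1 : 1 ≤ d) (hd2 : d ≤ n - 1)
    (C : Matrix (Fin (n - d)) (Fin n) K) (hC : C.rank = n - d)
    (A : Matrix (Fin n) (Fin n) K) :
    ((∃ v : Fin n → K, v ≠ 0 ∧ C.mulVec v = 0 ∧ ∃ μ : K, A.mulVec v = μ • v)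
      ↔ (kalmanMatrix C A).rank < n)
    ∧ ((kalmanMatrix C A).rank < n ↔
        ∀ r : Fin n → Fin (d + 1) × Fin (n - d),
          ((kalmanMatrix C A).submatrix r id).det = 0) := by
  classical
  have hdn : d < n := by omega
  -- mulVec of the Kalman matrix
  have hker : ∀ v : Fin n → K, (kalmanMatrix C A).mulVec v = 0 ↔
      ∀ i : ℕ, i ≤ d → C.mulVec ((A ^ i).mulVec v) = 0 := by
    intro v
    have hval : ∀ p : Fin (d + 1) × Fin (n - d),
        (kalmanMatrix C A).mulVec v p = C.mulVec ((A ^ (p.1 : ℕ)).mulVec v) p.2 := by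
      intro p
      rw [Matrix.mulVec_mulVec]
      rfl
    constructor
    · intro h i hi
      funext r2
      have := congrFun h (⟨i, by omega⟩, r2)
      rw [hval] at this
      simpa using this
    · intro h
      funext p
      rw [hval, h p.1 (by omega)]
      rfl
  refine ⟨?_, aux_rank_lt_iff_forall_det _⟩
  rw [aux_rank_lt_iff_exists_mulVec_eq_zero]
  constructor
  · -- easy direction: eigenvector in ker C gives kernel vector of Kalman matrix
    rintro ⟨v, hv0, hCv, μ, hAv⟩
    refine ⟨v, hv0, (hker v).2 ?_⟩
    have hpow : ∀ i : ℕ, (A ^ i).mulVec v = μ ^ i • v := by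
      intro i
      induction i with
      | zero => simp
      | succ i ih =>
        rw [pow_succ', ← Matrix.mulVec_mulVec, ih, Matrix.mulVec_smul, hAv,
          smul_smul, ← pow_succ]
    intro i _
    rw [hpow i, Matrix.mulVec_smul, hCv, smul_zero]
  · -- hard direction
    rintro ⟨v, hv0, hv⟩
    rw [hker] at hv
    set f := A.mulVecLin with hfdef
    set U := LinearMap.ker C.mulVecLin with hUdef
    have hUfin : finrank K U = d := by
      have h := LinearMap.finrank_range_add_finrank_ker C.mulVecLin
      rw [Module.finrank_fin_fun] at h
      have hC' : finrank K (LinearMap.range C.mulVecLin) = n - d := hC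
      rw [hUdef]
      omega
    -- the decreasing chain of subspaces
    set V : ℕ → Submodule K (Fin n → K) :=
      fun k => Nat.rec ⊤ (fun _ W => U ⊓ W.comap f) k with hVdef
    have hV0 : V 0 = ⊤ := rfl
    have hVsucc : ∀ k, V (k + 1) = U ⊓ (V k).comap f := fun _ => rfl
    have hmem : ∀ k (w : Fin n → K),
        w ∈ V k ↔ ∀ i < k, C.mulVec ((A ^ i).mulVec w) = 0 := by
      intro k
      induction k with
      | zero => simp [hV0]
      | succ k ih =>
        intro w
        rw [hVsucc, Submodule.mem_inf, Submodule.mem_comap, ih (f w)]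
        constructor
        · rintro ⟨h0, hs⟩ i hi
          cases i with
          | zero =>
            simpa [hUdef, LinearMap.mem_ker, Matrix.mulVecLin_apply] using h0
          | succ j =>
            have := hs j (by omega)
            rw [pow_succ, ← Matrix.mulVec_mulVec]
            simpa [hfdef, Matrix.mulVecLin_apply, Matrix.mulVec_mulVec] using this
        · intro h
          refine ⟨?_, ?_⟩
          · have := h 0 (by omega)
            simp only [pow_zero, Matrix.one_mulVec] at this
            simpa [hUdef, LinearMap.mem_ker, Matrix.mulVecLin_apply] using this
          · intro j hj
            have := h (j + 1) (by omega)
            rw [pow_succ, ← Matrix.mulVec_mulVec] at this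
            simpa [hfdef, Matrix.mulVecLin_apply, Matrix.mulVec_mulVec] using this
    have hanti : ∀ k, V (k + 1) ≤ V k := by
      intro k
      induction k with
      | zero => exact le_top
      | succ k ih =>
        rw [hVsucc (k + 1), hVsucc k]
        exact inf_le_inf_left _ (Submodule.comap_mono ih)
    have hanti' : Antitone V := antitone_nat_of_succ_le hanti
    have hvV : v ∈ V (d + 1) := (hmem (d + 1) v).2 (fun i hi => hv i (by omega))
    have hV1 : V 1 = U := by
      rw [show (1 : ℕ) = 0 + 1 from rfl, hVsucc 0, hV0]
      simp
    -- find a stabilization point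
    have hstab : ∃ k, 1 ≤ k ∧ k ≤ d ∧ V (k + 1) = V k := by
      by_contra hno
      push_neg at hno
      have hstrict : ∀ k, 1 ≤ k → k ≤ d → V (k + 1) < V k :=
        fun k h1 h2 => lt_of_le_of_ne (hanti k) (hno k h1 h2)
      have hdrop : ∀ j, j ≤ d → finrank K (V (j + 1)) + j ≤ d := by
        intro j
        induction j with
        | zero =>
          intro _
          have h1 : finrank K (V (0 + 1)) = d := by
            rw [show V (0 + 1) = U from hV1, hUfin]
          omega
        | succ j ih =>
          intro hj
          have h1 := ih (by omega)
          have h2 : finrank K (V (j + 1 + 1)) < finrank K (V (j + 1)) :=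
            Submodule.finrank_lt_finrank_of_lt (hstrict (j + 1) (by omega) hj)
          omega
      have := hdrop d le_rfl
      have hzero : finrank K (V (d + 1)) = 0 := by omega
      have hbot : V (d + 1) = ⊥ := Submodule.finrank_eq_zero.mp hzero
      rw [hbot, Submodule.mem_bot] at hvV
      exact hv0 hvV
    obtain ⟨k, hk1, hkd, hkstab⟩ := hstab
    -- V k is f-invariant, nonzero, contained in U
    have hinv : ∀ x ∈ V k, f x ∈ V k := by
      intro x hx
      have : x ∈ V (k + 1) := hkstab ▸ hx
      rw [hVsucc, Submodule.mem_inf, Submodule.mem_comap] at this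
      exact this.2
    have hVkU : V k ≤ U := hV1 ▸ hanti' hk1
    have hvVk : v ∈ V k := hanti' (by omega : k ≤ d + 1) hvV
    haveI : Nontrivial (V k) := by
      refine nontrivial_of_ne ⟨v, hvVk⟩ 0 ?_
      intro h
      exact hv0 (by simpa using congrArg Subtype.val h)
    set g : Module.End K (V k) := f.restrict hinv with hgdef
    obtain ⟨μ, hμ⟩ := Module.End.exists_eigenvalue g
    obtain ⟨w, hw⟩ := hμ.exists_hasEigenvector
    refine ⟨(w : Fin n → K), ?_, ?_, μ, ?_⟩
    · intro h
      exact hw.2 (Subtype.ext h)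
    · have : (w : Fin n → K) ∈ U := hVkU w.2
      simpa [hUdef, LinearMap.mem_ker, Matrix.mulVecLin_apply] using this
    · have happ : g w = μ • w := hw.apply_eq_smul
      have := congrArg Subtype.val happ
      simpa [hgdef, LinearMap.restrict_apply, hfdef, Matrix.mulVecLin_apply] using this
end

section
/- Let K be an algebraically closed field, n ≥ 2, 1 ≤ d ≤ n−1, and let C be an (n−d)×n matrix over K of rank n−d with L = ker C. For every 1 ≤ s ≤ d, an n×n matrix A over K has an A-invariant linear subspace of dimension at least s contained in L if and only if the Kalman matrix of A has rank at most n−s, i.e., if and only if all (n−s+1)×(n−s+1) minors of the Kalman matrix of A vanish. -/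
open Matrix

section AuxKalman

open Module Submodule

variable {K : Type*} [Field K]

lemma exists_li_comp' {ι V : Type*} [Fintype ι] [AddCommGroup V] [Module K V]
    (f : ι → V) (k : ℕ) (hk : k ≤ finrank K (span K (Set.range f))) :
    ∃ g : Fin k → ι, LinearIndependent K (f ∘ g) := by
  classical
  obtain ⟨t, hts, hspan, hli⟩ := exists_linearIndependent K (Set.range f)
  have htfin : t.Finite := (Set.finite_range f).subset hts
  haveI := htfin.fintype
  have hcard : k ≤ Fintype.card t := by
    rw [← Set.toFinset_card, ← finrank_span_set_eq_card hli, hspan]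
    exact hk
  obtain ⟨φ⟩ : Nonempty (Fin k ↪ t) :=
    Function.Embedding.nonempty_of_card_le (by simpa using hcard)
  have hsel : ∀ i : Fin k, ∃ j : ι, f j = (φ i : V) := fun i => hts (φ i).2
  choose g hg using hsel
  refine ⟨g, ?_⟩
  have : f ∘ g = (fun x : t => (x : V)) ∘ φ := by
    funext i; simp [hg i]
  rw [this]
  exact hli.comp φ φ.injective

lemma rank_submatrix_le'' {m n m' n' : Type*} [Fintype n] [Fintype m] [Fintype n'] [Fintype m']
    (M : Matrix m n K) (r : m' → m) (c : n' → n) :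
    (M.submatrix r c).rank ≤ M.rank := by
  have h1 : (M.submatrix r id).rank ≤ M.rank := by
    rw [rank_eq_finrank_span_row, rank_eq_finrank_span_row]
    apply Submodule.finrank_mono
    apply Submodule.span_mono
    rintro _ ⟨i, rfl⟩
    exact ⟨r i, rfl⟩
  have h2 : ((M.submatrix r id).submatrix id c).rank ≤ (M.submatrix r id).rank := by
    rw [rank_eq_finrank_span_cols, rank_eq_finrank_span_cols]
    apply Submodule.finrank_mono
    apply Submodule.span_mono
    rintro _ ⟨i, rfl⟩
    exact ⟨c i, rfl⟩
  calc (M.submatrix r c).rank = ((M.submatrix r id).submatrix id c).rank := by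
        rw [submatrix_submatrix]; rfl
    _ ≤ _ := h2.trans h1

lemma exists_minor' {m n : Type*} [Fintype m] [Fintype n] [DecidableEq m] [DecidableEq n]
    (M : Matrix m n K) (k : ℕ) (hk : k ≤ M.rank) :
    ∃ (r : Fin k → m) (c : Fin k → n), IsUnit (M.submatrix r c) := by
  have h1 : k ≤ finrank K (span K (Set.range Mᵀ)) := by
    rwa [show Set.range Mᵀ = Set.range M.col from rfl, ← rank_eq_finrank_span_cols]
  obtain ⟨c, hc⟩ := exists_li_comp' Mᵀ k h1
  set N : Matrix m (Fin k) K := M.submatrix id c with hN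
  have hrankN : N.rank = k := by
    rw [rank_eq_finrank_span_cols]
    have he : Set.range Nᵀ = Set.range (Mᵀ ∘ c) := by
      rw [hN, transpose_submatrix]; rfl
    rw [show Set.range N.col = Set.range (Mᵀ ∘ c) from he, finrank_span_eq_card hc, Fintype.card_fin]
  have h2 : k ≤ finrank K (span K (Set.range N)) := by
    rw [show Set.range N = Set.range N.row from rfl, ← rank_eq_finrank_span_row, hrankN]
  obtain ⟨r, hr⟩ := exists_li_comp' N k h2
  refine ⟨r, c, ?_⟩
  have heq : M.submatrix r c = N.submatrix r id := by
    rw [hN, submatrix_submatrix]; rfl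
  rw [heq]
  exact linearIndependent_rows_iff_isUnit.mp hr

variable {n d : ℕ}

noncomputable def kalmanVchain (C : Matrix (Fin (n - d)) (Fin n) K)
    (A : Matrix (Fin n) (Fin n) K) (k : ℕ) : Submodule K (Fin n → K) :=
  ⨅ i ∈ Finset.Iic k, LinearMap.ker (Matrix.mulVecLin (C * A ^ i))

variable (C : Matrix (Fin (n - d)) (Fin n) K) (A : Matrix (Fin n) (Fin n) K)

lemma mem_kalmanVchain {k : ℕ} {v : Fin n → K} :
    v ∈ kalmanVchain C A k ↔ ∀ i ≤ k, (C * A ^ i).mulVec v = 0 := by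
  simp [kalmanVchain, Submodule.mem_iInf, mulVecLin_apply]

lemma kalmanVchain_mono {k : ℕ} : kalmanVchain C A (k + 1) ≤ kalmanVchain C A k := by
  intro v hv
  rw [mem_kalmanVchain] at hv ⊢
  exact fun i hi => hv i (hi.trans (Nat.le_succ k))

lemma kalmanVchain_step {k : ℕ} {v : Fin n → K} (hv : v ∈ kalmanVchain C A (k + 1)) :
    A.mulVec v ∈ kalmanVchain C A k := by
  rw [mem_kalmanVchain] at hv ⊢
  intro i hi
  rw [mulVec_mulVec, Matrix.mul_assoc, ← pow_succ]
  exact hv (i + 1) (Nat.succ_le_succ hi)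

lemma kalmanVchain_step_eq {k : ℕ} (h : kalmanVchain C A k = kalmanVchain C A (k + 1)) :
    kalmanVchain C A (k + 1) = kalmanVchain C A (k + 2) := by
  refine le_antisymm ?_ (kalmanVchain_mono C A)
  intro v hv
  rw [mem_kalmanVchain]
  intro i hi
  rcases Nat.lt_or_ge i (k + 2) with hi' | hi'
  · exact (mem_kalmanVchain C A).mp hv i (Nat.lt_succ_iff.mp hi')
  · have hieq : i = k + 2 := le_antisymm hi hi'
    subst hieq
    have hAv : A.mulVec v ∈ kalmanVchain C A (k + 1) := h ▸ kalmanVchain_step C A hv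
    have := (mem_kalmanVchain C A).mp hAv (k + 1) le_rfl
    rw [mulVec_mulVec, Matrix.mul_assoc, ← pow_succ] at this
    exact this

lemma kalmanVchain_stab {k : ℕ} (h : kalmanVchain C A k = kalmanVchain C A (k + 1)) (j : ℕ) :
    kalmanVchain C A (k + j) = kalmanVchain C A k := by
  induction j with
  | zero => rfl
  | succ j ih =>
    have hstep : ∀ m : ℕ, kalmanVchain C A (k + m) = kalmanVchain C A (k + m + 1) := by
      intro m
      induction m with
      | zero => exact h
      | succ m ihm => exact kalmanVchain_step_eq C A ihm
    rw [show k + (j + 1) = (k + j) + 1 from rfl, ← hstep j, ih]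

lemma ker_kalman : LinearMap.ker (kalmanMatrix C A).mulVecLin = kalmanVchain C A d := by
  ext v
  rw [LinearMap.mem_ker, mem_kalmanVchain, mulVecLin_apply]
  constructor
  · intro h i hi
    funext rr
    exact congrFun h (⟨i, Nat.lt_succ_of_le hi⟩, rr)
  · intro h
    funext p
    exact congrFun (h p.1 (Nat.lt_succ_iff.mp p.1.2)) p.2

end AuxKalman

/-- For `1 ≤ s ≤ d`, an `n × n` matrix `A` has an `A`-invariant subspace of dimension at least
`s` contained in `L = ker C` if and only if the Kalman matrix has rank at most `n - s`, if and
only if all `(n-s+1) × (n-s+1)` minors of the Kalman matrix vanish. -/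
theorem stmt1 {K : Type*} [Field K] [IsAlgClosed K] (n d s : ℕ)
    (hn : 2 ≤ n) (hd1 : 1 ≤ d) (hd2 : d ≤ n - 1) (hs1 : 1 ≤ s) (hs2 : s ≤ d)
    (C : Matrix (Fin (n - d)) (Fin n) K) (hC : C.rank = n - d)
    (A : Matrix (Fin n) (Fin n) K) :
    ((∃ W : Submodule K (Fin n → K), s ≤ Module.finrank K W ∧
        (∀ v ∈ W, C.mulVec v = 0) ∧ (∀ v ∈ W, A.mulVec v ∈ W))
      ↔ (kalmanMatrix C A).rank ≤ n - s)
    ∧ ((kalmanMatrix C A).rank ≤ n - s ↔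
        ∀ (r : Fin (n - s + 1) → Fin (d + 1) × Fin (n - d)) (c : Fin (n - s + 1) → Fin n),
          ((kalmanMatrix C A).submatrix r c).det = 0) := by
  classical
  have hrn : (kalmanMatrix C A).rank
      + Module.finrank K (LinearMap.ker (kalmanMatrix C A).mulVecLin) = n := by
    have := LinearMap.finrank_range_add_finrank_ker (kalmanMatrix C A).mulVecLin
    rw [Module.finrank_fintype_fun_eq_card, Fintype.card_fin] at this
    exact this
  rw [ker_kalman] at hrn
  -- V 0 = ker C has dimension d
  have hV0 : Module.finrank K (kalmanVchain C A 0) = d := by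
    have hVeq : kalmanVchain C A 0 = LinearMap.ker C.mulVecLin := by
      ext v
      rw [mem_kalmanVchain, LinearMap.mem_ker, mulVecLin_apply]
      constructor
      · intro h
        have := h 0 le_rfl
        rwa [pow_zero, Matrix.mul_one] at this
      · intro h i hi
        interval_cases i
        rwa [pow_zero, Matrix.mul_one]
    have hCrn : C.rank + Module.finrank K (LinearMap.ker C.mulVecLin) = n := by
      have := LinearMap.finrank_range_add_finrank_ker C.mulVecLin
      rw [Module.finrank_fintype_fun_eq_card, Fintype.card_fin] at this
      exact this
    rw [hVeq]
    omega
  -- forward direction helpers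
  have hfirst : (∃ W : Submodule K (Fin n → K), s ≤ Module.finrank K W ∧
      (∀ v ∈ W, C.mulVec v = 0) ∧ (∀ v ∈ W, A.mulVec v ∈ W))
      ↔ (kalmanMatrix C A).rank ≤ n - s := by
    constructor
    · rintro ⟨W, hsW, hCW, hAW⟩
      have hpow : ∀ i : ℕ, ∀ v ∈ W, (A ^ i).mulVec v ∈ W := by
        intro i
        induction i with
        | zero => intro v hv; rwa [pow_zero, one_mulVec]
        | succ i ih =>
          intro v hv
          rw [pow_succ, ← mulVec_mulVec]
          exact ih _ (hAW v hv)
      have hWle : W ≤ kalmanVchain C A d := by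
        intro v hv
        rw [mem_kalmanVchain]
        intro i _
        rw [← mulVec_mulVec]
        exact hCW _ (hpow i v hv)
      have := Submodule.finrank_mono hWle
      omega
    · intro hrank
      have hsV : s ≤ Module.finrank K (kalmanVchain C A d) := by omega
      by_cases hstab : ∃ k < d, kalmanVchain C A k = kalmanVchain C A (k + 1)
      · obtain ⟨k, hkd, heq⟩ := hstab
        have hVd : kalmanVchain C A d = kalmanVchain C A k := by
          have := kalmanVchain_stab C A heq (d - k)
          rwa [Nat.add_sub_cancel' (le_of_lt hkd)] at this
        refine ⟨kalmanVchain C A d, hsV, ?_, ?_⟩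
        · intro v hv
          have := (mem_kalmanVchain C A).mp hv 0 (Nat.zero_le d)
          rwa [pow_zero, Matrix.mul_one] at this
        · intro v hv
          rw [hVd, heq] at hv
          rw [hVd]
          exact kalmanVchain_step C A hv
      · exfalso
        push_neg at hstab
        have hdec : ∀ j ≤ d, Module.finrank K (kalmanVchain C A j) + j ≤
            Module.finrank K (kalmanVchain C A 0) := by
          intro j
          induction j with
          | zero => intro _; omega
          | succ j ih =>
            intro hj
            have hlt : kalmanVchain C A (j + 1) < kalmanVchain C A j :=
              lt_of_le_of_ne (kalmanVchain_mono C A)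
                (fun h => hstab j (by omega) h.symm)
            have := Submodule.finrank_lt_finrank_of_lt hlt
            have := ih (by omega)
            omega
        have hmono : Module.finrank K (kalmanVchain C A d) ≤
            Module.finrank K (kalmanVchain C A 0) := by
          have := hdec d le_rfl
          omega
        have := hdec d le_rfl
        omega
  refine ⟨hfirst, ?_, ?_⟩
  · intro hrank r c
    by_contra hdet
    have hunit : IsUnit ((kalmanMatrix C A).submatrix r c) :=
      (Matrix.isUnit_iff_isUnit_det _).mpr (isUnit_iff_ne_zero.mpr hdet)
    have h1 : ((kalmanMatrix C A).submatrix r c).rank = n - s + 1 := by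
      rw [Matrix.rank_of_isUnit _ hunit, Fintype.card_fin]
    have h2 := rank_submatrix_le'' (kalmanMatrix C A) r c
    omega
  · intro hmin
    by_contra hrank
    have hk : n - s + 1 ≤ (kalmanMatrix C A).rank := by omega
    obtain ⟨r, c, hunit⟩ := exists_minor' (kalmanMatrix C A) (n - s + 1) hk
    have := (Matrix.isUnit_iff_isUnit_det _).mp hunit
    rw [hmin r c] at this
    exact (not_isUnit_zero this).elim
end

section
/- Let K be a field, n ≥ 2, 1 ≤ d ≤ n−1, and take C = (0_{(n−d)×d} | I_{n−d}), the (n−d)×n matrix consisting of a zero block followed by an identity block. Then for every n×n matrix A over K, the rank of the Kalman matrix of A equals (n−d) plus the rank of the small Kalman matrix of A, and the rank of the small Kalman matrix of A equals the rank of the reduced Kalman matrix of A. -/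
open Matrix

/-- The `(n-d) × n` matrix `C = (0 | I)` consisting of an `(n-d) × d` zero block followed by an
`(n-d) × (n-d)` identity block. -/
def zeroIdMatrix (K : Type*) [CommRing K] (n d : ℕ) : Matrix (Fin (n - d)) (Fin n) K :=
  fun i j => if (j : ℕ) = d + (i : ℕ) then 1 else 0

/-- The small Kalman matrix of `A`: the `d(n-d) × d` matrix obtained by vertically stacking the
blocks `[A^i]` for `i = 1, …, d`, where `[M]` is the submatrix of `M` formed by the last `n - d`
rows and the first `d` columns. -/
noncomputable def smallKalman {K : Type*} [CommRing K] {n d : ℕ} (hdn : d ≤ n)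
    (A : Matrix (Fin n) (Fin n) K) : Matrix (Fin d × Fin (n - d)) (Fin d) K :=
  fun p j =>
    (A ^ ((p.1 : ℕ) + 1)) ⟨d + (p.2 : ℕ), by have := p.2.isLt; omega⟩
      ⟨(j : ℕ), by have := j.isLt; omega⟩

/-- The reduced Kalman matrix built from a `d × d` block `A11` and an `m × d` block `A21`: the
vertical stacking of the blocks `A21 * A11 ^ i` for `i = 0, 1, …, d - 1`. -/
noncomputable def reducedKalman {K : Type*} [CommRing K] {d m : ℕ}
    (A11 : Matrix (Fin d) (Fin d) K) (A21 : Matrix (Fin m) (Fin d) K) :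
    Matrix (Fin d × Fin m) (Fin d) K :=
  fun p j => (A21 * A11 ^ (p.1 : ℕ)) p.2 j

/-- The upper-left `d × d` block of an `n × n` matrix. -/
def blockUL {K : Type*} {n d : ℕ} (hdn : d ≤ n) (A : Matrix (Fin n) (Fin n) K) :
    Matrix (Fin d) (Fin d) K :=
  fun i j => A ⟨(i : ℕ), by have := i.isLt; omega⟩ ⟨(j : ℕ), by have := j.isLt; omega⟩

/-- The lower-left `(n-d) × d` block of an `n × n` matrix. -/
def blockLL {K : Type*} {n d : ℕ} (hdn : d ≤ n) (A : Matrix (Fin n) (Fin n) K) :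
    Matrix (Fin (n - d)) (Fin d) K :=
  fun i j => A ⟨d + (i : ℕ), by have := i.isLt; omega⟩ ⟨(j : ℕ), by have := j.isLt; omega⟩

open Submodule Module

namespace Stmt2Aux

variable {K : Type*} [Field K] {n d : ℕ}

/-- The embedding of the last `n - d` indices. -/
def emb (hdn : d ≤ n) : Fin (n - d) → Fin n := fun r => ⟨d + (r : ℕ), by omega⟩

lemma emb_injective (hdn : d ≤ n) : Function.Injective (emb hdn) := by
  intro a b h
  have : d + (a : ℕ) = d + (b : ℕ) := congrArg Fin.val h
  exact Fin.ext (by omega)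

lemma sum_split (hdn : d ≤ n) (f : Fin n → K) :
    ∑ t, f t = (∑ t : Fin d, f (Fin.castLE hdn t)) + ∑ r : Fin (n - d), f (emb hdn r) := by
  have hbij : Function.Bijective (Sum.elim (Fin.castLE hdn) (emb hdn) :
      Fin d ⊕ Fin (n - d) → Fin n) := by
    rw [Fintype.bijective_iff_injective_and_card]
    constructor
    · rintro (a | a) (b | b) h <;>
        simp only [Sum.elim_inl, Sum.elim_inr] at h <;>
        have := congrArg Fin.val h <;>
        simp only [Fin.coe_castLE, emb] at this
      · exact congrArg Sum.inl (Fin.ext this)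
      · exact absurd this (by have := a.isLt; omega)
      · exact absurd this (by have := b.isLt; omega)
      · exact congrArg Sum.inr (Fin.ext (by omega))
    · simp [Fintype.card_sum]; omega
  rw [← Fintype.sum_bijective _ hbij (fun x => f (Sum.elim (Fin.castLE hdn) (emb hdn) x)) f
      (fun x => rfl), Fintype.sum_sum_type]
  rfl

lemma mul_apply_split (hdn : d ≤ n) (M N : Matrix (Fin n) (Fin n) K) (i j : Fin n) :
    (M * N) i j = (∑ t : Fin d, M i (Fin.castLE hdn t) * N (Fin.castLE hdn t) j)
      + ∑ r : Fin (n - d), M i (emb hdn r) * N (emb hdn r) j := by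
  rw [Matrix.mul_apply, sum_split hdn]

end Stmt2Aux

namespace Stmt2Aux

variable {K : Type*} [Field K] {n d : ℕ} (hdn : d ≤ n) (A : Matrix (Fin n) (Fin n) K)

/-- Row `r` of the lower-left block of `A ^ (k+1)`. -/
noncomputable def Lrow (k : ℕ) (r : Fin (n - d)) : Fin d → K :=
  fun j => (A ^ (k + 1)) (emb hdn r) (Fin.castLE hdn j)

/-- Row `r` of `A21 * A11 ^ k`. -/
noncomputable def Grow (k : ℕ) (r : Fin (n - d)) : Fin d → K :=
  (blockLL hdn A * (blockUL hdn A) ^ k) r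

lemma Lrow_succ (k : ℕ) (r : Fin (n - d)) :
    Lrow hdn A (k + 1) r = (fun j => ∑ t, Lrow hdn A k r t * blockUL hdn A t j)
      + fun j => ∑ s, (A ^ (k + 1)) (emb hdn r) (emb hdn s) * blockLL hdn A s j := by
  funext j
  show (A ^ (k + 1 + 1)) (emb hdn r) (Fin.castLE hdn j) = _
  rw [pow_succ, mul_apply_split hdn]
  rfl

lemma Lrow_zero (r : Fin (n - d)) (j : Fin d) : Lrow hdn A 0 r j = blockLL hdn A r j := by
  simp only [Lrow, zero_add, pow_one]
  rfl

lemma Grow_zero (r : Fin (n - d)) : Grow hdn A 0 r = Lrow hdn A 0 r := by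
  funext j
  simp only [Grow, pow_zero, Matrix.mul_one, Lrow_zero]

lemma Grow_succ (k : ℕ) (r : Fin (n - d)) :
    Grow hdn A (k + 1) r = fun j => ∑ t, Grow hdn A k r t * blockUL hdn A t j := by
  funext j
  show (blockLL hdn A * (blockUL hdn A ^ k * blockUL hdn A)) r j = _
  rw [← Matrix.mul_assoc, Matrix.mul_apply]
  rfl

/-- span of the `Grow j s` for `j ≤ k`. -/
noncomputable def Tspan (k : ℕ) : Submodule K (Fin d → K) :=
  span K {v | ∃ j ≤ k, ∃ s, v = Grow hdn A j s}

/-- span of the `Lrow j s` for `j ≤ k`. -/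
noncomputable def Uspan (k : ℕ) : Submodule K (Fin d → K) :=
  span K {v | ∃ j ≤ k, ∃ s, v = Lrow hdn A j s}

lemma Tspan_mono {k l : ℕ} (h : k ≤ l) : Tspan hdn A k ≤ Tspan hdn A l :=
  span_mono (by rintro v ⟨j, hj, s, rfl⟩; exact ⟨j, hj.trans h, s, rfl⟩)

lemma Uspan_mono {k l : ℕ} (h : k ≤ l) : Uspan hdn A k ≤ Uspan hdn A l :=
  span_mono (by rintro v ⟨j, hj, s, rfl⟩; exact ⟨j, hj.trans h, s, rfl⟩)

lemma vecMul_mem_Tspan {v : Fin d → K} {k : ℕ} (hv : v ∈ Tspan hdn A k) :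
    (fun j => ∑ t, v t * blockUL hdn A t j) ∈ Tspan hdn A (k + 1) := by
  have : (fun j => ∑ t, v t * blockUL hdn A t j) = (blockUL hdn A).vecMulLinear v := by
    funext j; simp [Matrix.vecMulLinear_apply, Matrix.vecMul, dotProduct]
  rw [this]
  have h2 : (blockUL hdn A).vecMulLinear v ∈
      Submodule.map (blockUL hdn A).vecMulLinear (Tspan hdn A k) :=
    Submodule.mem_map_of_mem hv
  rw [Tspan, Submodule.map_span] at h2
  refine span_mono ?_ h2
  rintro w ⟨x, ⟨j, hj, s, rfl⟩, rfl⟩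
  refine ⟨j + 1, by omega, s, ?_⟩
  rw [Grow_succ]
  funext i
  simp [Matrix.vecMulLinear_apply, Matrix.vecMul, dotProduct]

lemma vecMul_mem_span {v : Fin d → K} {p : Submodule K (Fin d → K)} {q : Submodule K (Fin d → K)}
    (M : Matrix (Fin d) (Fin d) K) (hv : v ∈ p)
    (hgen : Submodule.map M.vecMulLinear p ≤ q) :
    (fun j => ∑ t, v t * M t j) ∈ q := by
  have : (fun j => ∑ t, v t * M t j) = M.vecMulLinear v := by
    funext j; simp [Matrix.vecMulLinear_apply, Matrix.vecMul, dotProduct]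
  rw [this]
  exact hgen (Submodule.mem_map_of_mem hv)

lemma Lrow_mem_Tspan (k : ℕ) (r : Fin (n - d)) : Lrow hdn A k r ∈ Tspan hdn A k := by
  induction k with
  | zero =>
    rw [← Grow_zero hdn A r]
    exact subset_span ⟨0, le_refl 0, r, rfl⟩
  | succ k ih =>
    rw [Lrow_succ]
    refine Submodule.add_mem _ (vecMul_mem_Tspan hdn A ih) ?_
    have : (fun j => ∑ s, (A ^ (k + 1)) (emb hdn r) (emb hdn s) * blockLL hdn A s j)
        = ∑ s, (A ^ (k + 1)) (emb hdn r) (emb hdn s) • Grow hdn A 0 s := by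
      funext j
      rw [Finset.sum_apply]
      refine Finset.sum_congr rfl fun s _ => ?_
      rw [Pi.smul_apply, smul_eq_mul, Grow_zero, Lrow_zero]
    rw [this]
    exact Submodule.sum_mem _ fun s _ => Submodule.smul_mem _ _
      (subset_span ⟨0, by omega, s, rfl⟩)

lemma Grow_mem_Uspan (k : ℕ) (r : Fin (n - d)) : Grow hdn A k r ∈ Uspan hdn A k := by
  induction k with
  | zero =>
    rw [Grow_zero]
    exact subset_span ⟨0, le_refl 0, r, rfl⟩
  | succ k ih =>
    rw [Grow_succ]
    refine vecMul_mem_span _ ih ?_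
    rw [Uspan, Submodule.map_span]
    refine (span_le).2 ?_
    rintro w ⟨x, ⟨j, hj, s, rfl⟩, rfl⟩
    -- vecMulLinear (Lrow j s) = Lrow (j+1) s - correction
    have hrec := Lrow_succ hdn A j s
    have hsum : Lrow hdn A (j + 1) s
        = (blockUL hdn A).vecMulLinear (Lrow hdn A j s)
          + ∑ t, (A ^ (j + 1)) (emb hdn s) (emb hdn t) • Lrow hdn A 0 t := by
      rw [hrec]
      funext i
      simp only [Pi.add_apply, Finset.sum_apply, Pi.smul_apply, smul_eq_mul,
        Matrix.vecMulLinear_apply, Matrix.vecMul, dotProduct, Lrow_zero]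
    have hexp : (blockUL hdn A).vecMulLinear (Lrow hdn A j s)
        = Lrow hdn A (j + 1) s
          - ∑ t, (A ^ (j + 1)) (emb hdn s) (emb hdn t) • Lrow hdn A 0 t := by
      rw [hsum]; abel
    rw [hexp]
    refine Submodule.sub_mem _ (subset_span ⟨j + 1, by omega, s, rfl⟩) ?_
    exact Submodule.sum_mem _ fun t _ => Submodule.smul_mem _ _
      (subset_span ⟨0, by omega, t, rfl⟩)

lemma span_small_eq_span_reduced (hd1 : 1 ≤ d) :
    span K (Set.range (smallKalman hdn A))
      = span K (Set.range (reducedKalman (blockUL hdn A) (blockLL hdn A))) := by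
  have hS : Set.range (smallKalman hdn A) = {v | ∃ j ≤ d - 1, ∃ s, v = Lrow hdn A j s} := by
    ext v
    constructor
    · rintro ⟨p, rfl⟩
      exact ⟨p.1, by have := p.1.isLt; omega, p.2, rfl⟩
    · rintro ⟨j, hj, s, rfl⟩
      exact ⟨(⟨j, by omega⟩, s), rfl⟩
  have hG : Set.range (reducedKalman (blockUL hdn A) (blockLL hdn A))
      = {v | ∃ j ≤ d - 1, ∃ s, v = Grow hdn A j s} := by
    ext v
    constructor
    · rintro ⟨p, rfl⟩
      exact ⟨p.1, by have := p.1.isLt; omega, p.2, rfl⟩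
    · rintro ⟨j, hj, s, rfl⟩
      exact ⟨(⟨j, by omega⟩, s), rfl⟩
  rw [hS, hG]
  show Uspan hdn A (d-1) = Tspan hdn A (d-1)
  apply le_antisymm
  · rw [Uspan]
    refine span_le.2 ?_
    rintro v ⟨j, hj, s, rfl⟩
    exact Tspan_mono hdn A hj (Lrow_mem_Tspan hdn A j s)
  · rw [Tspan]
    refine span_le.2 ?_
    rintro v ⟨j, hj, s, rfl⟩
    exact Uspan_mono hdn A hj (Grow_mem_Uspan hdn A j s)

end Stmt2Aux

namespace Stmt2Aux

variable {K : Type*} [Field K] {n d : ℕ} (hdn : d ≤ n) (A : Matrix (Fin n) (Fin n) K)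

noncomputable def krow (i : ℕ) (r : Fin (n - d)) : Fin n → K := fun x => (A ^ i) (emb hdn r) x

lemma zeroId_mul (M : Matrix (Fin n) (Fin n) K) (r : Fin (n - d)) (j : Fin n) :
    (zeroIdMatrix K n d * M) r j = M (emb hdn r) j := by
  rw [Matrix.mul_apply, Finset.sum_eq_single (emb hdn r)]
  · simp [zeroIdMatrix, emb]
  · intro t _ ht
    have hv : (t : ℕ) ≠ d + (r : ℕ) := fun h => ht (Fin.ext (by simp [emb, h]))
    simp [zeroIdMatrix, hv]
  · simp

lemma kalman_row (p : Fin (d + 1) × Fin (n - d)) :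
    kalmanMatrix (zeroIdMatrix K n d) A p = krow hdn A (p.1 : ℕ) p.2 := by
  funext j
  exact zeroId_mul hdn (A ^ (p.1 : ℕ)) p.2 j

/-- standard basis row supported at position `d + s`. -/
def Erow (s : Fin (n - d)) : Fin n → K := fun x => if (x : ℕ) = d + (s : ℕ) then 1 else 0

lemma Erow_eq_single (s : Fin (n - d)) : (Erow s : Fin n → K) = Pi.single (emb hdn s) 1 := by
  funext x
  rw [Pi.single_apply]
  exact if_congr (by rw [Fin.ext_iff]; exact Iff.rfl) rfl rfl

lemma krow_zero (r : Fin (n - d)) : krow hdn A 0 r = Erow r := by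
  funext x
  simp only [krow, pow_zero, Matrix.one_apply, Erow]
  exact if_congr (by rw [Fin.ext_iff, eq_comm]; rfl) rfl rfl

/-- `Lrow` padded by zeros to a row of width `n`. -/
noncomputable def pLrow (k : ℕ) (r : Fin (n - d)) : Fin n → K :=
  fun x => if (x : ℕ) < d then (A ^ (k + 1)) (emb hdn r) x else 0

lemma krow_succ_decomp (k : ℕ) (r : Fin (n - d)) :
    krow hdn A (k + 1) r
      = pLrow hdn A k r + ∑ s, ((A ^ (k + 1)) (emb hdn r) (emb hdn s)) • Erow s := by
  funext x
  simp only [Pi.add_apply, Finset.sum_apply, Pi.smul_apply, smul_eq_mul, krow, pLrow, Erow]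
  by_cases h : (x : ℕ) < d
  · rw [if_pos h, Finset.sum_eq_zero fun s _ => by
      rw [if_neg (by have := s.isLt; omega), mul_zero]]
    rw [add_zero]
  · rw [if_neg h]
    have hx := x.isLt
    have hx2 : x = emb hdn ⟨(x : ℕ) - d, by omega⟩ := Fin.ext (by simp [emb]; omega)
    rw [Finset.sum_eq_single (⟨(x : ℕ) - d, by omega⟩ : Fin (n - d))]
    · rw [if_pos (by simp; omega), mul_one, zero_add, ← hx2]
    · intro t _ ht
      rw [if_neg, mul_zero]
      intro hc
      exact ht (Fin.ext (by simp; omega))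
    · simp

variable (K n d) in
/-- span of the standard basis rows supported on the last `n - d` coordinates. -/
noncomputable def W1 : Submodule K (Fin n → K) := span K (Set.range (Erow : Fin (n - d) → _))

/-- span of the padded small-Kalman rows. -/
noncomputable def W2 : Submodule K (Fin n → K) :=
  span K (Set.range fun p : Fin d × Fin (n - d) => pLrow hdn A p.1 p.2)

lemma span_kalman_eq : span K (Set.range (kalmanMatrix (zeroIdMatrix K n d) A))
    = W1 K n d ⊔ W2 hdn A := by
  apply le_antisymm
  · refine span_le.2 ?_
    rintro v ⟨p, rfl⟩
    rw [kalman_row hdn]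
    obtain ⟨⟨i, hi⟩, r⟩ := p
    match i, hi with
    | 0, _ =>
      exact Submodule.mem_sup_left (by rw [krow_zero]; exact subset_span ⟨r, rfl⟩)
    | (k + 1), hi =>
      rw [krow_succ_decomp]
      refine Submodule.add_mem _
        (Submodule.mem_sup_right (subset_span ⟨(⟨k, by omega⟩, r), rfl⟩)) ?_
      exact Submodule.sum_mem _ fun s _ => Submodule.smul_mem _ _
        (Submodule.mem_sup_left (subset_span ⟨s, rfl⟩))
  · refine sup_le (span_le.2 ?_) (span_le.2 ?_)
    · rintro v ⟨s, rfl⟩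
      refine subset_span ⟨(0, s), ?_⟩
      rw [kalman_row]
      exact (krow_zero hdn A s)
    · rintro v ⟨p, rfl⟩
      show pLrow hdn A (↑p.1) p.2 ∈ _
      have hd : pLrow hdn A p.1 p.2
          = krow hdn A ((p.1 : ℕ) + 1) p.2
            - ∑ s, ((A ^ ((p.1 : ℕ) + 1)) (emb hdn p.2) (emb hdn s)) • Erow s := by
        rw [krow_succ_decomp]; abel
      rw [hd]
      refine Submodule.sub_mem _ ?_ ?_
      · refine subset_span ⟨(⟨(p.1 : ℕ) + 1, by have := p.1.isLt; omega⟩, p.2), ?_⟩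
        rw [kalman_row]
      · refine Submodule.sum_mem _ fun s _ => Submodule.smul_mem _ _ ?_
        refine subset_span ⟨(0, s), ?_⟩
        rw [kalman_row]
        exact (krow_zero hdn A s)

end Stmt2Aux

namespace Stmt2Aux

variable {K : Type*} [Field K] {n d : ℕ} (hdn : d ≤ n) (A : Matrix (Fin n) (Fin n) K)

/-- restriction to the first `d` coordinates. -/
noncomputable def p1 : (Fin n → K) →ₗ[K] (Fin d → K) := LinearMap.funLeft K K (Fin.castLE hdn)

/-- restriction to the last `n - d` coordinates. -/
noncomputable def p2 : (Fin n → K) →ₗ[K] (Fin (n - d) → K) := LinearMap.funLeft K K (emb hdn)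

lemma W1_le_ker_p1 : W1 K n d ≤ LinearMap.ker (p1 hdn) := by
  refine span_le.2 ?_
  rintro v ⟨s, rfl⟩
  rw [SetLike.mem_coe, LinearMap.mem_ker]
  funext t
  show Erow s (Fin.castLE hdn t) = 0
  simp only [Erow, Fin.coe_castLE]
  rw [if_neg (by have := t.isLt; have := s.isLt; omega)]

lemma W2_le_ker_p2 : W2 hdn A ≤ LinearMap.ker (p2 hdn) := by
  refine span_le.2 ?_
  rintro v ⟨p, rfl⟩
  rw [SetLike.mem_coe, LinearMap.mem_ker]
  funext s
  show pLrow hdn A p.1 p.2 (emb hdn s) = 0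
  simp only [pLrow, emb]
  simp

lemma ker_p1_inf_ker_p2 : LinearMap.ker (p1 hdn) ⊓ LinearMap.ker (p2 (K := K) hdn) = ⊥ := by
  rw [eq_bot_iff]
  rintro v ⟨h1, h2⟩
  rw [SetLike.mem_coe, LinearMap.mem_ker] at h1 h2
  simp only [Submodule.mem_bot]
  funext x
  by_cases h : (x : ℕ) < d
  · have : x = Fin.castLE hdn ⟨(x : ℕ), h⟩ := Fin.ext rfl
    rw [this]
    exact congrFun h1 ⟨(x : ℕ), h⟩
  · have hx := x.isLt
    have : x = emb hdn ⟨(x : ℕ) - d, by omega⟩ := Fin.ext (by simp [emb]; omega)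
    rw [this]
    exact congrFun h2 ⟨(x : ℕ) - d, by omega⟩

lemma W1_inf_W2 : W1 K n d ⊓ W2 hdn A = ⊥ := by
  rw [eq_bot_iff, ← ker_p1_inf_ker_p2 hdn]
  exact inf_le_inf (W1_le_ker_p1 hdn) (W2_le_ker_p2 hdn A)

include hdn in
lemma finrank_W1 : Module.finrank K (W1 K n d) = n - d := by
  have hE : (Erow : Fin (n - d) → Fin n → K) = ⇑(Pi.basisFun K (Fin n)) ∘ emb hdn := by
    funext s
    rw [Function.comp_apply, Pi.basisFun_apply, Erow_eq_single hdn]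
  have li : LinearIndependent K (Erow : Fin (n - d) → Fin n → K) := by
    rw [hE]
    exact (Pi.basisFun K (Fin n)).linearIndependent.comp _ (emb_injective hdn)
  rw [W1, finrank_span_eq_card li, Fintype.card_fin]

lemma p1_pLrow (p : Fin d × Fin (n - d)) :
    p1 hdn (pLrow hdn A p.1 p.2) = smallKalman hdn A p := by
  funext j
  show pLrow hdn A p.1 p.2 (Fin.castLE hdn j) = _
  simp only [pLrow, Fin.coe_castLE]
  rw [if_pos j.isLt]
  rfl

lemma finrank_W2 : Module.finrank K (W2 hdn A) = (smallKalman hdn A).rank := by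
  have hker : LinearMap.ker ((p1 hdn).domRestrict (W2 hdn A)) = ⊥ := by
    rw [eq_bot_iff]
    rintro ⟨v, hv⟩ hm
    rw [LinearMap.mem_ker, LinearMap.domRestrict_apply] at hm
    have : v ∈ LinearMap.ker (p1 hdn) ⊓ LinearMap.ker (p2 (K := K) hdn) :=
      ⟨hm, W2_le_ker_p2 hdn A hv⟩
    rw [ker_p1_inf_ker_p2 hdn] at this
    rw [Submodule.mem_bot]
    exact Subtype.ext (by simpa using this)
  have hrange : LinearMap.range ((p1 hdn).domRestrict (W2 hdn A))
      = span K (Set.range (smallKalman hdn A)) := by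
    rw [LinearMap.range_domRestrict, W2, Submodule.map_span, ← Set.range_comp]
    have hc : (⇑(p1 hdn) ∘ fun p : Fin d × Fin (n - d) => pLrow hdn A p.1 p.2)
        = smallKalman hdn A := funext fun p => p1_pLrow hdn A p
    rw [hc]
  have := LinearMap.finrank_range_add_finrank_ker ((p1 hdn).domRestrict (W2 hdn A))
  rw [hker, hrange, finrank_bot, add_zero] at this
  rw [← this, (smallKalman hdn A).rank_eq_finrank_span_row, Matrix.row]

lemma kalman_rank (hd1 : 1 ≤ d) :
    (kalmanMatrix (zeroIdMatrix K n d) A).rank = (n - d) + (smallKalman hdn A).rank := by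
  rw [Matrix.rank_eq_finrank_span_row, Matrix.row, span_kalman_eq hdn A]
  have h := Submodule.finrank_sup_add_finrank_inf_eq (W1 K n d) (W2 hdn A)
  rw [W1_inf_W2 hdn A, finrank_bot, add_zero, finrank_W1 hdn, finrank_W2 hdn A] at h
  exact h

end Stmt2Aux

/-- For `C = (0 | I)`, the rank of the Kalman matrix of `A` equals `(n - d)` plus the rank of the
small Kalman matrix of `A`, and the rank of the small Kalman matrix equals the rank of the reduced
Kalman matrix. -/
theorem stmt2 {K : Type*} [Field K] (n d : ℕ) (hn : 2 ≤ n) (hd1 : 1 ≤ d) (hd2 : d ≤ n - 1)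
    (A : Matrix (Fin n) (Fin n) K) :
    (kalmanMatrix (zeroIdMatrix K n d) A).rank
        = (n - d) + (smallKalman (show d ≤ n by omega) A).rank
    ∧ (smallKalman (show d ≤ n by omega) A).rank
        = (reducedKalman (blockUL (show d ≤ n by omega) A)
            (blockLL (show d ≤ n by omega) A)).rank := by
  have hdn : d ≤ n := by omega
  constructor
  · exact Stmt2Aux.kalman_rank hdn A hd1
  · rw [Matrix.rank_eq_finrank_span_row, Matrix.rank_eq_finrank_span_row, Matrix.row, Matrix.row,
      Stmt2Aux.span_small_eq_span_reduced hdn A hd1]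
end

section
/- Let K be a field, n ≥ 2, 1 ≤ d ≤ n−1, and let C be an (n−d)×n matrix over K of rank n−d. For every n×n matrix A over K, the kernel of the Kalman matrix of A (viewed as a linear map K^n → K^{(d+1)(n−d)}) is an A-invariant subspace of K^n. -/
open Matrix

/-- The kernel of the Kalman matrix of `A` (viewed as a linear map `K^n → K^{(d+1)(n-d)}`) is an
`A`-invariant subspace of `K^n`. -/
theorem stmt3 {K : Type*} [Field K] (n d : ℕ) (hn : 2 ≤ n) (hd1 : 1 ≤ d) (hd2 : d ≤ n - 1)
    (C : Matrix (Fin (n - d)) (Fin n) K) (hC : C.rank = n - d)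
    (A : Matrix (Fin n) (Fin n) K) :
    ∀ v ∈ LinearMap.ker (kalmanMatrix C A).mulVecLin,
      A.mulVec v ∈ LinearMap.ker (kalmanMatrix C A).mulVecLin := by
  classical
  -- the chain of kernels
  set W : ℕ → Submodule K (Fin n → K) :=
    fun k => ⨅ i ∈ Finset.range (k + 1), LinearMap.ker (C * A ^ i).mulVecLin with hWdef
  have hmem : ∀ (k : ℕ) (v : Fin n → K),
      v ∈ W k ↔ ∀ i ≤ k, (C * A ^ i).mulVec v = 0 := by
    intro k v
    simp [hWdef, Submodule.mem_iInf, Nat.lt_succ_iff]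
  have hshift : ∀ (i : ℕ) (v : Fin n → K),
      (C * A ^ (i + 1)).mulVec v = (C * A ^ i).mulVec (A.mulVec v) := by
    intro i v
    rw [pow_succ, ← Matrix.mul_assoc, ← Matrix.mulVec_mulVec]
  -- recurrence
  have hrec : ∀ k, W (k + 1) =
      LinearMap.ker C.mulVecLin ⊓ Submodule.comap A.mulVecLin (W k) := by
    intro k
    ext v
    simp only [Submodule.mem_inf, Submodule.mem_comap, LinearMap.mem_ker,
      Matrix.mulVecLin_apply, hmem]
    constructor
    · intro h
      refine ⟨by simpa using h 0 (Nat.zero_le _), fun i hi => ?_⟩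
      rw [← hshift]
      exact h (i + 1) (by omega)
    · intro ⟨h0, h⟩ i hi
      match i with
      | 0 => simpa using h0
      | (i + 1) => rw [hshift]; exact h i (by omega)
  have hP : ∀ k, W (k + 1) = W k → W (k + 2) = W (k + 1) := by
    intro k h
    rw [show k + 2 = (k + 1) + 1 from rfl, hrec (k + 1), h, ← hrec k]; exact h
  have hmono : ∀ k, W (k + 1) ≤ W k := by
    intro k v hv
    rw [hmem] at hv ⊢
    exact fun i hi => hv i (by omega)
  -- dimension of W 0
  have hW0 : Module.finrank K (W 0) = d := by
    have hW0eq : W 0 = LinearMap.ker C.mulVecLin := by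
      ext v
      simp [hmem]
    have hrn := LinearMap.finrank_range_add_finrank_ker C.mulVecLin
    rw [Module.finrank_fin_fun] at hrn
    have hrk : Module.finrank K (LinearMap.range C.mulVecLin) = n - d := hC
    rw [hW0eq]
    omega
  -- stabilization
  have hst : W (d + 1) = W d := by
    by_cases hex : ∃ k ≤ d, W (k + 1) = W k
    · obtain ⟨k, hk, heq⟩ := hex
      have hall : ∀ j, W (k + j + 1) = W (k + j) := by
        intro j
        induction j with
        | zero => simpa using heq
        | succ j ih => exact hP _ ih
      have := hall (d - k)
      rwa [Nat.add_sub_cancel' hk] at this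
    · exfalso
      push_neg at hex
      have hlt : ∀ k ≤ d, W (k + 1) < W k :=
        fun k hk => lt_of_le_of_ne (hmono k) (hex k hk)
      have hdim : ∀ k, k ≤ d → Module.finrank K (W k) + k ≤ d := by
        intro k
        induction k with
        | zero => intro _; simp [hW0]
        | succ k ih =>
          intro hk
          have h1 := ih (by omega)
          have h2 : Module.finrank K (W (k + 1)) < Module.finrank K (W k) :=
            Submodule.finrank_lt_finrank_of_lt (hlt k (by omega))
          omega
      have h0 : Module.finrank K (W d) = 0 := by
        have := hdim d le_rfl; omega
      have hbot : W d = ⊥ := Submodule.finrank_eq_zero.mp h0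
      have := hlt d le_rfl
      rw [hbot] at this
      exact absurd this (by simp)
  -- ker of the Kalman matrix is W d
  have hker : ∀ v : Fin n → K,
      v ∈ LinearMap.ker (kalmanMatrix C A).mulVecLin ↔ v ∈ W d := by
    intro v
    rw [LinearMap.mem_ker, Matrix.mulVecLin_apply, hmem, funext_iff]
    constructor
    · intro h i hi
      funext r
      exact h (⟨i, by omega⟩, r)
    · intro h p
      have := h (p.1 : ℕ) (by omega)
      calc (kalmanMatrix C A).mulVec v p = (C * A ^ (p.1 : ℕ)).mulVec v p.2 := rfl
        _ = 0 := by rw [this]; rfl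
  intro v hv
  rw [hker] at hv ⊢
  rw [hmem]
  intro i hi
  rw [← hshift]
  have hv' : v ∈ W (d + 1) := hst ▸ hv
  exact (hmem (d + 1) v).mp hv' (i + 1) (by omega)
end
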